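/- The Fisher information of the noncentral chi-squared family {χ²_1(2θ) : θ > 0} (one degree of freedom, noncentrality 2θ) satisfies i(θ) < 1/(2θ) for every θ > 0; equivalently, i(θ) is strictly less than half the Fisher information 1/θ of the Poisson family with mean θ. -/

import Mathlib

open MeasureTheory Set Real

/-- Density of the noncentral chi-squared distribution χ²₁(2θ). -/
noncomputable def g1 (θ x : ℝ) : ℝ :=
  (2 * Real.pi * x) ^ (-(1:ℝ)/2) * Real.exp (-θ - x / 2) * Real.cosh (Real.sqrt (2 * θ * x))

/-- Fisher information of the family {χ²₁(2θ) : θ > 0}. -/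
noncomputable def fisherInfo (θ : ℝ) : ℝ :=
  (1 / (2 * θ)) *
    (∫ x in Set.Ioi (0:ℝ), x * Real.tanh (Real.sqrt (2 * θ * x)) ^ 2 * g1 θ x) - 1

namespace FisherAux

lemma integrable_gauss : Integrable (fun x : ℝ => exp (-x^2/2)) := by
  have h := integrable_exp_neg_mul_sq (by norm_num : (0:ℝ) < 1/2)
  refine h.congr (Filter.Eventually.of_forall fun x => ?_)
  simp only
  rw [show -(1/2:ℝ)*x^2 = -x^2/2 by ring]

lemma integrable_mul_gauss : Integrable (fun x : ℝ => x * exp (-x^2/2)) := by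
  have h := integrable_mul_exp_neg_mul_sq (by norm_num : (0:ℝ) < 1/2)
  refine h.congr (Filter.Eventually.of_forall fun x => ?_)
  simp only
  rw [show -(1/2:ℝ)*x^2 = -x^2/2 by ring]

lemma integrable_sq_gauss : Integrable (fun x : ℝ => x^2 * exp (-x^2/2)) := by
  have h := integrable_rpow_mul_exp_neg_mul_sq (by norm_num : (0:ℝ) < 1/2)
    (by norm_num : (-1:ℝ) < 2)
  refine h.congr (Filter.Eventually.of_forall fun x => ?_)
  simp only
  rw [show (x:ℝ) ^ (2:ℝ) = x ^ (2:ℕ) by rw [← Real.rpow_natCast x 2]; norm_num,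
    show -(1/2:ℝ)*x^2 = -x^2/2 by ring]

lemma int_gauss : ∫ x : ℝ, exp (-x^2/2) = √(2*π) := by
  have h := integral_gaussian (1/2)
  rw [show (π/(1/2)) = 2*π by ring] at h
  rw [← h]
  congr 1 with x
  congr 1; ring

lemma int_sq_gauss : ∫ x : ℝ, x^2 * exp (-x^2/2) = √(2*π) := by
  have h := integral_rpow_mul_exp_neg_mul_rpow (p := 2) (q := 2) (b := 1/2)
    (by norm_num) (by norm_num) (by norm_num)
  have hL : ∫ x in Ioi (0:ℝ), x ^ (2:ℝ) * exp (-(1/2) * x ^ (2:ℝ))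
      = ∫ x in Ioi (0:ℝ), x^2 * exp (-x^2/2) := by
    refine setIntegral_congr_fun measurableSet_Ioi (fun x _ => ?_)
    rw [show (x:ℝ) ^ (2:ℝ) = x ^ (2:ℕ) by rw [← Real.rpow_natCast x 2]; norm_num,
      show -(1/2:ℝ)*x^2 = -x^2/2 by ring]
  have hG : Real.Gamma (((2:ℝ)+1)/2) = √π/2 := by
    rw [show ((2:ℝ)+1)/2 = 1/2 + 1 by norm_num, Real.Gamma_add_one (by norm_num),
      Real.Gamma_one_half_eq]
    ring
  have hR : ((1/2:ℝ)) ^ (-((2:ℝ)+1)/2) = 2*√2 := by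
    rw [show (1/2:ℝ) = 2⁻¹ by norm_num,
      Real.inv_rpow (by norm_num : (0:ℝ) ≤ 2), ← Real.rpow_neg (by norm_num : (0:ℝ) ≤ 2)]
    rw [show -(-((2:ℝ)+1)/2) = 1 + 1/2 by norm_num, Real.rpow_add (by norm_num) ,
      Real.rpow_one, ← Real.sqrt_eq_rpow]
  rw [hL, hG, hR] at h
  have habs := integral_comp_abs (f := fun x : ℝ => x^2 * exp (-x^2/2))
  have : ∫ x : ℝ, x^2 * exp (-x^2/2) = ∫ x : ℝ, |x|^2 * exp (-|x|^2/2) := by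
    congr 1 with x; rw [sq_abs]
  rw [this, habs, h, Real.sqrt_mul (by norm_num : (0:ℝ) ≤ 2)]
  ring

lemma integrableQ (c : ℝ) : Integrable (fun y : ℝ => (y+c)^2 * exp (-y^2/2)) := by
  have h := (integrable_sq_gauss.add (integrable_mul_gauss.const_mul (2*c))).add
    (integrable_gauss.const_mul (c^2))
  refine h.congr (Filter.Eventually.of_forall fun y => ?_)
  simp only [Pi.add_apply]
  ring

lemma intQsum (a : ℝ) :
    ∫ y : ℝ, ((y+a)^2 + (y-a)^2) * exp (-y^2/2) = (2 + 2*a^2) * √(2*π) := by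
  have h1 : ∫ y : ℝ, ((y+a)^2 + (y-a)^2) * exp (-y^2/2)
      = ∫ y : ℝ, (2 * (y^2 * exp (-y^2/2)) + (2*a^2) * exp (-y^2/2)) := by
    congr 1 with y; ring
  rw [h1, integral_add (integrable_sq_gauss.const_mul 2) (integrable_gauss.const_mul (2*a^2)),
    integral_const_mul, integral_const_mul, int_sq_gauss, int_gauss]
  ring

lemma int_cosh_line (a : ℝ) :
    ∫ u : ℝ, u^2 * exp (-u^2/2) * Real.cosh (a*u)
      = Real.exp (a^2/2) * ((1 + a^2) * √(2*π)) := by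
  have key : ∀ u : ℝ, u^2 * exp (-u^2/2) * Real.cosh (a*u)
      = (Real.exp (a^2/2)/2) * ((fun y => (y+a)^2 * exp (-y^2/2)) (u-a)
        + (fun y => (y+(-a))^2 * exp (-y^2/2)) (u+a)) := by
    intro u
    simp only
    rw [Real.cosh_eq, show (u-a+a) = u by ring, show (u+a+-a) = u by ring,
      show (-(u-a)^2/2) = -u^2/2 + (a*u + -(a^2/2)) by ring,
      show (-(u+a)^2/2) = -u^2/2 + (-(a*u) + -(a^2/2)) by ring,
      Real.exp_add, Real.exp_add, Real.exp_add, Real.exp_add, Real.exp_neg (a^2/2)]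
    have := Real.exp_pos (a^2/2)
    field_simp
  rw [integral_congr_ae (Filter.Eventually.of_forall key), integral_const_mul,
    integral_add ((integrableQ a).comp_sub_right a) ((integrableQ (-a)).comp_add_right a),
    integral_sub_right_eq_self (fun y => (y+a)^2 * exp (-y^2/2)) a,
    integral_add_right_eq_self (fun y => (y+(-a))^2 * exp (-y^2/2)) a,
    ← integral_add (integrableQ a) (integrableQ (-a))]
  have : ∫ y : ℝ, ((y+a)^2 * exp (-y^2/2) + (y+(-a))^2 * exp (-y^2/2))
      = ∫ y : ℝ, ((y+a)^2 + (y-a)^2) * exp (-y^2/2) := by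
    congr 1 with y; ring_nf
  rw [this, intQsum]
  ring

lemma int_cosh_Ioi (a : ℝ) :
    ∫ u in Ioi (0:ℝ), u^2 * exp (-u^2/2) * Real.cosh (a*u)
      = Real.exp (a^2/2) * ((1 + a^2) * √(2*π)) / 2 := by
  have habs := integral_comp_abs (f := fun u : ℝ => u^2 * exp (-u^2/2) * Real.cosh (a*u))
  have h1 : ∫ u : ℝ, |u|^2 * exp (-|u|^2/2) * Real.cosh (a*|u|)
      = ∫ u : ℝ, u^2 * exp (-u^2/2) * Real.cosh (a*u) := by
    congr 1 with u
    rcases abs_cases u with ⟨h, _⟩ | ⟨h, _⟩ <;> rw [h] <;>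
      simp [Real.cosh_neg, mul_neg, neg_sq]
  rw [h1, int_cosh_line] at habs
  linarith

lemma intF_val (θ : ℝ) (hθ : 0 < θ) :
    ∫ x in Ioi (0:ℝ), x * g1 θ x = 1 + 2*θ := by
  set a : ℝ := Real.sqrt (2*θ) with ha_def
  have ha : 0 < a := Real.sqrt_pos.mpr (by linarith)
  have ha2 : a^2 = 2*θ := Real.sq_sqrt (by linarith)
  have hsub := integral_comp_rpow_Ioi (fun x => x * g1 θ x) (p := 2) two_ne_zero
  have hcong : ∫ u in Ioi (0:ℝ), (|2| * u ^ ((2:ℝ) - 1)) • ((fun x => x * g1 θ x) (u ^ (2:ℝ)))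
      = ∫ u in Ioi (0:ℝ), (2 * (2*π) ^ (-(1:ℝ)/2) * Real.exp (-θ))
          * (u^2 * exp (-u^2/2) * Real.cosh (a*u)) := by
    refine setIntegral_congr_fun measurableSet_Ioi (fun u hu => ?_)
    have hu' : (0:ℝ) < u := hu
    have hrp : u ^ ((2:ℝ)) = u^(2:ℕ) := by rw [← Real.rpow_natCast u 2]; norm_num
    simp only [smul_eq_mul]
    rw [show ((2:ℝ) - 1) = 1 by norm_num, Real.rpow_one, hrp]
    rw [g1]
    rw [show 2 * π * u^(2:ℕ) = (2*π) * u^(2:ℕ) by ring,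
      Real.mul_rpow (by positivity) (by positivity),
      show (u^(2:ℕ):ℝ) ^ (-(1:ℝ)/2) = u⁻¹ by
        rw [← Real.rpow_natCast u 2, ← Real.rpow_mul hu'.le]
        norm_num
        exact (Real.rpow_neg_one u) ▸ by norm_num [Real.rpow_neg_one],
      show 2 * θ * u^(2:ℕ) = (2*θ) * u^(2:ℕ) by ring,
      Real.sqrt_mul (by linarith : (0:ℝ) ≤ 2*θ), Real.sqrt_sq hu'.le,
      show -θ - u^(2:ℕ)/2 = -θ + -(u^(2:ℕ))/2 by ring, Real.exp_add]
    have : u ≠ 0 := ne_of_gt hu'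
    field_simp
    rw [ha_def, Real.sqrt_mul (by norm_num : (0:ℝ) ≤ 2) θ]
    ring
  rw [hcong, integral_const_mul, int_cosh_Ioi, ha2] at hsub
  rw [← hsub, show 2*θ/2 = θ by ring]
  have h2π : (0:ℝ) < 2*π := by positivity
  have e1 : (2*π) ^ (-(1:ℝ)/2) * √(2*π) = 1 := by
    rw [Real.sqrt_eq_rpow, ← Real.rpow_add h2π]
    norm_num
  have hexp : Real.exp (-θ) * Real.exp θ = 1 := by
    rw [← Real.exp_add]; norm_num
  linear_combination (Real.exp (-θ) * Real.exp θ * (1+2*θ)) * e1 + (1+2*θ) * hexp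

lemma measurable_g1_aux (θ : ℝ) : Measurable (fun x : ℝ => g1 θ x) := by
  unfold g1
  fun_prop

lemma intF_integrable (θ : ℝ) (hθ : 0 < θ) :
    IntegrableOn (fun x => x * g1 θ x) (Ioi (0:ℝ)) := by
  set a : ℝ := Real.sqrt (2*θ) with ha_def
  have ha2 : a^2 = 2*θ := Real.sq_sqrt (by linarith)
  set C : ℝ := (2*π) ^ (-(1:ℝ)/2) * Real.exp (-θ) * Real.exp (2*θ) with hC
  have hbase := integrableOn_rpow_mul_exp_neg_mul_rpow
    (by norm_num : (-1:ℝ) < 1/2) (by norm_num : (0:ℝ) < 1) (by norm_num : (0:ℝ) < 1/4)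
  refine Integrable.mono' (hbase.const_mul C)
    ((measurable_id.mul (measurable_g1_aux θ)).aestronglyMeasurable) ?_
  filter_upwards [ae_restrict_mem measurableSet_Ioi] with x hx
  have hx' : (0:ℝ) < x := hx
  have hF0 : (0:ℝ) ≤ x * g1 θ x := by
    unfold g1
    have := (Real.cosh_pos (Real.sqrt (2*θ*x))).le
    positivity
  rw [Real.norm_eq_abs, abs_of_nonneg hF0]
  have heq : x * g1 θ x
      = ((2*π) ^ (-(1:ℝ)/2) * x ^ ((1:ℝ)/2)) * (Real.exp (-θ - x/2) * Real.cosh (a*Real.sqrt x)) := by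
    unfold g1
    rw [Real.mul_rpow (by positivity) hx'.le,
      show 2*θ*x = (2*θ)*x by ring, Real.sqrt_mul (by linarith : (0:ℝ) ≤ 2*θ) x]
    have : x * x ^ (-(1:ℝ)/2) = x ^ ((1:ℝ)/2) := by
      nth_rewrite 1 [← Real.rpow_one x]
      rw [← Real.rpow_add hx']
      norm_num
    calc x * ((2*π) ^ (-(1:ℝ)/2) * x ^ (-(1:ℝ)/2) * Real.exp (-θ - x/2)
          * Real.cosh (√(2*θ) * √x))
        = (x * x ^ (-(1:ℝ)/2)) * (2*π) ^ (-(1:ℝ)/2)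
          * (Real.exp (-θ - x/2) * Real.cosh (√(2*θ) * √x)) := by ring
      _ = _ := by rw [this]; ring
  have hsx : Real.sqrt x ^ 2 = x := Real.sq_sqrt hx'.le
  have hkey : Real.exp (-θ - x/2) * Real.cosh (a*Real.sqrt x)
      ≤ Real.exp (-θ) * Real.exp (2*θ) * Real.exp (-(1/4) * x) := by
    have hc : Real.cosh (a*Real.sqrt x) ≤ Real.exp (a*Real.sqrt x) := by
      rw [Real.cosh_eq]
      have h1 : Real.exp (-(a*Real.sqrt x)) ≤ Real.exp (a*Real.sqrt x) := by
        apply Real.exp_le_exp.mpr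
        have : 0 ≤ a * Real.sqrt x := by positivity
        linarith
      linarith
    calc Real.exp (-θ - x/2) * Real.cosh (a*Real.sqrt x)
        ≤ Real.exp (-θ - x/2) * Real.exp (a*Real.sqrt x) := by
          exact mul_le_mul_of_nonneg_left hc (Real.exp_pos _).le
      _ = Real.exp (-θ - x/2 + a*Real.sqrt x) := by rw [← Real.exp_add]
      _ ≤ Real.exp (-θ + 2*θ + -(1/4) * x) := by
          apply Real.exp_le_exp.mpr
          nlinarith [sq_nonneg (a - Real.sqrt x / 2), hsx, ha2]
      _ = Real.exp (-θ) * Real.exp (2*θ) * Real.exp (-(1/4) * x) := by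
          rw [← Real.exp_add, ← Real.exp_add]
  calc x * g1 θ x
      = ((2*π) ^ (-(1:ℝ)/2) * x ^ ((1:ℝ)/2)) * (Real.exp (-θ - x/2) * Real.cosh (a*Real.sqrt x)) := heq
    _ ≤ ((2*π) ^ (-(1:ℝ)/2) * x ^ ((1:ℝ)/2)) * (Real.exp (-θ) * Real.exp (2*θ) * Real.exp (-(1/4) * x)) := by
        apply mul_le_mul_of_nonneg_left hkey (by positivity)
    _ = C * (x ^ ((1:ℝ)/2) * Real.exp (-(1/4) * x ^ (1:ℝ))) := by
        rw [Real.rpow_one]; ring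

end FisherAux

open FisherAux in
/-- The Fisher information of χ²₁(2θ) is strictly less than 1/(2θ), i.e. strictly less
than half of the Fisher information 1/θ of the Poisson(θ) family. -/
theorem fisherInfo_lt_half_poisson (θ : ℝ) (hθ : 0 < θ) :
    fisherInfo θ < 1 / (2 * θ) := by
  set T : ℝ → ℝ := fun x => x * Real.tanh (Real.sqrt (2 * θ * x)) ^ 2 * g1 θ x with hT_def
  set S : ℝ → ℝ := fun x =>
    x * ((2 * π * x) ^ (-(1:ℝ)/2) * Real.exp (-θ - x / 2)
      * (Real.cosh (Real.sqrt (2 * θ * x)))⁻¹) with hS_def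
  have hFint := intF_integrable θ hθ
  have hg1nn : ∀ x : ℝ, 0 < x → 0 < g1 θ x := by
    intro x hx
    unfold g1
    have := Real.cosh_pos (Real.sqrt (2*θ*x))
    positivity
  -- pointwise facts on Ioi 0
  have hTle : ∀ x ∈ Ioi (0:ℝ), T x ≤ x * g1 θ x := by
    intro x hx
    have hx' : (0:ℝ) < x := hx
    have ht : Real.tanh (Real.sqrt (2*θ*x)) ^ 2 ≤ 1 := by
      have hc := Real.cosh_pos (Real.sqrt (2*θ*x))
      have hid := Real.cosh_sq_sub_sinh_sq (Real.sqrt (2*θ*x))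
      rw [Real.tanh_eq_sinh_div_cosh, div_pow]
      rw [div_le_one (by positivity)]
      nlinarith
    have hg := (hg1nn x hx').le
    calc T x = x * Real.tanh (Real.sqrt (2*θ*x)) ^ 2 * g1 θ x := rfl
      _ ≤ x * 1 * g1 θ x := by gcongr
      _ = x * g1 θ x := by ring
  have hTnn : ∀ x ∈ Ioi (0:ℝ), 0 ≤ T x := by
    intro x hx
    have hx' : (0:ℝ) < x := hx
    have := (hg1nn x hx').le
    have := sq_nonneg (Real.tanh (Real.sqrt (2*θ*x)))
    simp only [hT_def]
    positivity
  have hSpos : ∀ x ∈ Ioi (0:ℝ), 0 < S x := by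
    intro x hx
    have hx' : (0:ℝ) < x := hx
    have := Real.cosh_pos (Real.sqrt (2*θ*x))
    simp only [hS_def]
    positivity
  have hSle : ∀ x ∈ Ioi (0:ℝ), S x ≤ x * g1 θ x := by
    intro x hx
    have hx' : (0:ℝ) < x := hx
    have hc := Real.cosh_pos (Real.sqrt (2*θ*x))
    have h1c := Real.one_le_cosh (Real.sqrt (2*θ*x))
    have hinv : (Real.cosh (Real.sqrt (2*θ*x)))⁻¹ ≤ Real.cosh (Real.sqrt (2*θ*x)) := by
      rw [inv_le_iff_one_le_mul₀ hc]
      nlinarith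
    simp only [hS_def]
    unfold g1
    have hrp : (0:ℝ) ≤ (2*π*x) ^ (-(1:ℝ)/2) := by positivity
    calc x * ((2*π*x) ^ (-(1:ℝ)/2) * Real.exp (-θ - x/2) * (Real.cosh (Real.sqrt (2*θ*x)))⁻¹)
        ≤ x * ((2*π*x) ^ (-(1:ℝ)/2) * Real.exp (-θ - x/2) * Real.cosh (Real.sqrt (2*θ*x))) := by
          gcongr
      _ = x * ((2*π*x) ^ (-(1:ℝ)/2) * Real.exp (-θ - x/2) * Real.cosh (Real.sqrt (2*θ*x))) := rfl
  -- T = F - S on Ioi 0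
  have hTFS : ∀ x ∈ Ioi (0:ℝ), T x = x * g1 θ x - S x := by
    intro x hx
    set s := Real.sqrt (2*θ*x) with hs_def
    have hc := Real.cosh_pos s
    have h0 : Real.tanh s ^ 2 * Real.cosh s = Real.cosh s - (Real.cosh s)⁻¹ := by
      rw [Real.tanh_eq_sinh_div_cosh, div_pow, Real.sinh_sq]
      field_simp
    simp only [hT_def, hS_def]
    unfold g1
    rw [← hs_def]
    linear_combination (x * ((2*π*x) ^ (-(1:ℝ)/2) * Real.exp (-θ - x/2))) * h0
  -- measurability
  have hTmeas : Measurable T := by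
    simp only [hT_def]
    have : Measurable fun x : ℝ => Real.tanh (Real.sqrt (2*θ*x)) := by
      have he : (fun x:ℝ => Real.tanh (Real.sqrt (2*θ*x)))
          = fun x => Real.sinh (Real.sqrt (2*θ*x)) / Real.cosh (Real.sqrt (2*θ*x)) :=
        funext fun x => Real.tanh_eq_sinh_div_cosh _
      rw [he]; fun_prop
    exact (measurable_id.mul (this.pow measurable_const)).mul (measurable_g1_aux θ)
  have hSmeas : Measurable S := by
    simp only [hS_def]
    fun_prop
  -- integrability from domination
  have hTint : IntegrableOn T (Ioi (0:ℝ)) := by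
    refine Integrable.mono' hFint hTmeas.aestronglyMeasurable ?_
    filter_upwards [ae_restrict_mem measurableSet_Ioi] with x hx
    rw [Real.norm_eq_abs, abs_of_nonneg (hTnn x hx)]
    exact hTle x hx
  have hSint : IntegrableOn S (Ioi (0:ℝ)) := by
    refine Integrable.mono' hFint hSmeas.aestronglyMeasurable ?_
    filter_upwards [ae_restrict_mem measurableSet_Ioi] with x hx
    rw [Real.norm_eq_abs, abs_of_nonneg (hSpos x hx).le]
    exact hSle x hx
  -- integral of S positive
  have hSintpos : 0 < ∫ x in Ioi (0:ℝ), S x := by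
    rw [setIntegral_pos_iff_support_of_nonneg_ae ?_ hSint]
    · have hsub : Ioi (0:ℝ) ⊆ Function.support S ∩ Ioi 0 :=
        fun x hx => ⟨ne_of_gt (hSpos x hx), hx⟩
      calc (0:ENNReal) < volume (Ioi (0:ℝ)) := by rw [Real.volume_Ioi]; exact ENNReal.zero_lt_top
        _ ≤ volume (Function.support S ∩ Ioi 0) := measure_mono hsub
    · filter_upwards [ae_restrict_mem measurableSet_Ioi] with x hx
      exact (hSpos x hx).le
  -- integral identity
  have hintT : ∫ x in Ioi (0:ℝ), T x = (∫ x in Ioi (0:ℝ), x * g1 θ x) - ∫ x in Ioi (0:ℝ), S x := by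
    rw [← integral_sub hFint hSint]
    exact setIntegral_congr_fun measurableSet_Ioi (fun x hx => hTFS x hx)
  have hlt : ∫ x in Ioi (0:ℝ), T x < 1 + 2*θ := by
    rw [hintT, intF_val θ hθ]
    linarith
  have h2θ : (0:ℝ) < 1/(2*θ) := by positivity
  have := mul_lt_mul_of_pos_left hlt h2θ
  have hfin : fisherInfo θ = (1/(2*θ)) * (∫ x in Ioi (0:ℝ), T x) - 1 := rfl
  have hval : (1/(2*θ)) * (1 + 2*θ) = 1/(2*θ) + 1 := by field_simp
  rw [hfin]
  linarith
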